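/- Suppose in the block-based DFS that when a vertex u is popped from the stack S without having found a cycle, u.block is set to k − |S| + 1 where |S| is the stack size at the time u was pushed. If u is later pushed again with stack size |S'| satisfying the admission condition |S'| + u.block ≤ k, then |S'| < |S|; hence the sequence of stack sizes at which u is pushed is strictly decreasing, bounding the number of pushes of u by k. -/
import Mathlib


variable {V : Type*}

/-- A closed walk of length `h` in a directed graph with edge relation `E`:
`w 0, w 1, …, w h` with consecutive edges and `w 0 = w h`. -/
def IsClosedWalk (E : V → V → Prop) (h : ℕ) (w : ℕ → V) : Prop :=
  (∀ i < h, E (w i) (w (i + 1))) ∧ w 0 = w h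

/-- A simple cycle of length `h`: a closed walk whose first `h` vertices are pairwise distinct. -/
def IsSimpleCycle (E : V → V → Prop) (h : ℕ) (w : ℕ → V) : Prop :=
  IsClosedWalk E h w ∧ ∀ a < h, ∀ b < h, w a = w b → a = b

/-- In the block-based DFS, if u is popped (failed) at stack depth S
(so u.block := k − S + 1) and later pushed again at depth S′ passing the admission
test S′ + u.block ≤ k, then S′ < S; hence the stack depths at successive pushes of u
are strictly decreasing and lie in [1, k], bounding the number of pushes of u by k. -/
theorem stmt19 (k : ℕ) (hk : 1 ≤ k) :
    (∀ S S' : ℕ, 1 ≤ S → S ≤ k → S' + (k - S + 1) ≤ k → S' < S) ∧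
    (∀ (n : ℕ) (d : Fin n → ℕ), StrictAnti d → (∀ i, 1 ≤ d i ∧ d i ≤ k) → n ≤ k) := by
  constructor
  · intro S S' h1 h2 h3; omega
  · intro n d hanti hbd
    have hinj : Function.Injective d := hanti.injective
    have : ∀ i, d i ∈ Finset.Icc 1 k := fun i => Finset.mem_Icc.mpr (hbd i)
    have := Finset.card_le_card_of_injOn (s := Finset.univ) d (fun i _ => this i) (hinj.injOn)
    simpa [Nat.card_Icc] using this
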